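/- Let X be a topological space, let A ⊆ X be a closed subset, and suppose r : X × [0,1] → X × [0,1] is a retraction of X × [0,1] onto (A × [0,1]) ∪ (X × {0}) (i.e., r is continuous, its image is contained in (A × [0,1]) ∪ (X × {0}), and r fixes that set pointwise). Let π₁ : X × [0,1] → X and π₂ : X × [0,1] → [0,1] be the projections. Define u : X → [0,1] by u(x) = sup_{τ ∈ [0,1]} (τ − π₂(r(x,τ))) and H : X × [0,1] → X by H(x,s) = π₁(r(x,s)). Then: the supremum defining u is attained; u is continuous; A = u⁻¹(0); H is continuous with H(x,0) = x for all x ∈ X, H(a,s) = a for all a ∈ A and s ∈ [0,1], and H(x,1) ∈ A whenever u(x) < 1. In particular, (X, A) is an NDR pair. -/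

import Mathlib

open unitInterval

/-- `S` is a retract of the topological space `Z`. -/
def IsRetract {Z : Type*} [TopologicalSpace Z] (S : Set Z) : Prop :=
  ∃ r : Z → Z, Continuous r ∧ Set.range r ⊆ S ∧ ∀ z ∈ S, r z = z

/-- The subset `(A × [0,1]) ∪ (X × {0})` of `X × [0,1]`. -/
def cylinderUnionBase {X : Type*} [TopologicalSpace X] (A : Set X) : Set (X × I) :=
  {p : X × I | p.1 ∈ A ∨ p.2 = 0}

/-- `(X, A)` is an NDR pair. -/
def IsNDRPair {X : Type*} [TopologicalSpace X] (A : Set X) : Prop :=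
  ∃ (u : X → I) (H : X × I → X),
    Continuous u ∧ A = u ⁻¹' {0} ∧
    Continuous H ∧ (∀ x : X, H (x, 0) = x) ∧
    (∀ a ∈ A, ∀ s : I, H (a, s) = a) ∧
    ∀ x : X, (u x : ℝ) < 1 → H (x, 1) ∈ A

private lemma bddAbove_range_contMap (f : C(I, ℝ)) :
    BddAbove (Set.range fun τ : I => f τ) :=
  (isCompact_range f.continuous).bddAbove

private lemma sup_lipschitz : LipschitzWith 1 (fun f : C(I, ℝ) => ⨆ τ : I, f τ) := by
  apply LipschitzWith.of_dist_le_mul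
  intro f g
  rw [NNReal.coe_one, one_mul]
  have key : ∀ f g : C(I, ℝ), (⨆ τ : I, f τ) ≤ (⨆ τ : I, g τ) + dist f g := by
    intro f g
    refine ciSup_le fun τ => ?_
    have h1 : dist (f τ) (g τ) ≤ dist f g := ContinuousMap.dist_apply_le_dist τ
    rw [Real.dist_eq] at h1
    have h2 : f τ - g τ ≤ |f τ - g τ| := le_abs_self _
    have h3 : g τ ≤ ⨆ τ₀ : I, g τ₀ := le_ciSup (bddAbove_range_contMap g) τ
    linarith
  rw [Real.dist_eq, abs_sub_le_iff]
  constructor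
  · have := key f g; linarith
  · have := key g f; rw [dist_comm] at this; linarith

theorem ndrPair_of_retraction {X : Type*} [TopologicalSpace X] (A : Set X) (hA : IsClosed A)
    (r : X × I → X × I) (hr : Continuous r)
    (hrange : ∀ p : X × I, r p ∈ cylinderUnionBase A)
    (hfix : ∀ p ∈ cylinderUnionBase A, r p = p) :
    (∀ x : X, ∃ τ : I,
        IsGreatest (Set.range fun τ₀ : I => (τ₀ : ℝ) - ((r (x, τ₀)).2 : ℝ))
          ((τ : ℝ) - ((r (x, τ)).2 : ℝ))) ∧
      Continuous (fun x : X => ⨆ τ₀ : I, ((τ₀ : ℝ) - ((r (x, τ₀)).2 : ℝ))) ∧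
      A = {x : X | (⨆ τ₀ : I, ((τ₀ : ℝ) - ((r (x, τ₀)).2 : ℝ))) = 0} ∧
      Continuous (fun p : X × I => (r p).1) ∧
      (∀ x : X, (r (x, 0)).1 = x) ∧
      (∀ a ∈ A, ∀ s : I, (r (a, s)).1 = a) ∧
      (∀ x : X, (⨆ τ₀ : I, ((τ₀ : ℝ) - ((r (x, τ₀)).2 : ℝ))) < 1 → (r (x, 1)).1 ∈ A) ∧
      IsNDRPair A := by
  -- the function g and its continuity
  set g : X × I → ℝ := fun p => (p.2 : ℝ) - ((r p).2 : ℝ) with hg_def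
  have hg : Continuous g := by
    exact (continuous_subtype_val.comp continuous_snd).sub
      (continuous_subtype_val.comp (continuous_snd.comp hr))
  set u : X → ℝ := fun x => ⨆ τ₀ : I, ((τ₀ : ℝ) - ((r (x, τ₀)).2 : ℝ)) with hu_def
  -- boundedness
  have hgle : ∀ x (τ : I), g (x, τ) ≤ 1 := by
    intro x τ
    have h1 : (τ : ℝ) ≤ 1 := τ.2.2
    have h2 : (0 : ℝ) ≤ ((r (x, τ)).2 : ℝ) := (r (x, τ)).2.2.1
    simp only [hg_def]
    linarith
  have hbdd : ∀ x : X, BddAbove (Set.range fun τ₀ : I => (τ₀ : ℝ) - ((r (x, τ₀)).2 : ℝ)) := by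
    intro x
    exact ⟨1, by rintro y ⟨τ, rfl⟩; exact hgle x τ⟩
  -- fixed points
  have hfixA : ∀ a ∈ A, ∀ s : I, r (a, s) = (a, s) := fun a ha s => hfix _ (Or.inl ha)
  have hfix0 : ∀ x : X, r (x, 0) = (x, 0) := fun x => hfix _ (Or.inr rfl)
  -- basic bounds on u
  have hle : ∀ x (τ : I), (τ : ℝ) - ((r (x, τ)).2 : ℝ) ≤ u x :=
    fun x τ => le_ciSup (hbdd x) τ
  have hu0 : ∀ x : X, 0 ≤ u x := by
    intro x
    have := hle x 0
    simpa [hfix0 x] using this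
  have hu1 : ∀ x : X, u x ≤ 1 := fun x => ciSup_le (hgle x)
  -- (1) sup attained
  have part1 : ∀ x : X, ∃ τ : I,
      IsGreatest (Set.range fun τ₀ : I => (τ₀ : ℝ) - ((r (x, τ₀)).2 : ℝ))
        ((τ : ℝ) - ((r (x, τ)).2 : ℝ)) := by
    intro x
    have hc : IsCompact (Set.range fun τ₀ : I => (τ₀ : ℝ) - ((r (x, τ₀)).2 : ℝ)) :=
      isCompact_range (by exact hg.comp (Continuous.prodMk_right x))
    obtain ⟨m, hm⟩ := hc.exists_isGreatest (Set.range_nonempty _)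
    obtain ⟨τ, rfl⟩ := hm.1
    exact ⟨τ, hm⟩
  -- (2) continuity of u
  have part2 : Continuous u := by
    have hcu : Continuous fun x : X =>
        (fun f : C(I, ℝ) => ⨆ τ : I, f τ) ((ContinuousMap.curry ⟨g, hg⟩) x) :=
      sup_lipschitz.continuous.comp (ContinuousMap.curry (⟨g, hg⟩ : C(X × I, ℝ))).continuous
    convert hcu using 2
    rfl
  -- (3) A = u⁻¹(0)
  have part3 : A = {x : X | u x = 0} := by
    ext x
    constructor
    · intro hx
      have : ∀ τ : I, (τ : ℝ) - ((r (x, τ)).2 : ℝ) = 0 := by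
        intro τ
        rw [hfixA x hx τ]
        ring
      simp only [hu_def, Set.mem_setOf_eq, this, ciSup_const]
    · intro hx
      simp only [Set.mem_setOf_eq] at hx
      -- for τ ≠ 0, (r (x,τ)).1 ∈ A
      have hmem : ∀ τ : I, τ ≠ 0 → (r (x, τ)).1 ∈ A := by
        intro τ hτ
        rcases hrange (x, τ) with h | h
        · exact h
        · exfalso
          have h1 : (τ : ℝ) - ((r (x, τ)).2 : ℝ) ≤ 0 := hx ▸ hle x τ
          rw [h] at h1
          have : (τ : ℝ) ≤ 0 := by simpa using h1
          exact hτ (Subtype.ext (le_antisymm this τ.2.1))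
      -- approach 0 along a sequence
      set seq : ℕ → I := fun n => ⟨(n + 1 : ℝ)⁻¹, by
        constructor
        · positivity
        · rw [inv_le_one_iff₀]; right; exact le_add_of_nonneg_left (Nat.cast_nonneg n)⟩ with hseq
      have hseqne : ∀ n, seq n ≠ 0 := by
        intro n h
        have : ((n : ℝ) + 1)⁻¹ = 0 := congrArg Subtype.val h
        have hpos : (0 : ℝ) < ((n : ℝ) + 1)⁻¹ := by positivity
        linarith
      have hseqtend : Filter.Tendsto seq Filter.atTop (nhds 0) := by
        rw [tendsto_subtype_rng]
        simpa [hseq] using tendsto_one_div_add_atTop_nhds_zero_nat (𝕜 := ℝ)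
      have hφ : Continuous fun τ : I => (r (x, τ)).1 :=
        continuous_fst.comp (hr.comp (Continuous.prodMk_right x))
      have htend : Filter.Tendsto (fun n => (r (x, seq n)).1) Filter.atTop
          (nhds ((r (x, (0 : I))).1)) :=
        (hφ.tendsto 0).comp hseqtend
      rw [hfix0 x] at htend
      exact hA.mem_of_tendsto htend
        (Filter.Eventually.of_forall fun n => hmem (seq n) (hseqne n))
  -- (4) continuity of H
  have part4 : Continuous fun p : X × I => (r p).1 := continuous_fst.comp hr
  -- (5)
  have part5 : ∀ x : X, (r (x, 0)).1 = x := fun x => by rw [hfix0 x]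
  -- (6)
  have part6 : ∀ a ∈ A, ∀ s : I, (r (a, s)).1 = a := fun a ha s => by rw [hfixA a ha s]
  -- (7)
  have part7 : ∀ x : X, u x < 1 → (r (x, 1)).1 ∈ A := by
    intro x hx
    rcases hrange (x, 1) with h | h
    · exact h
    · exfalso
      have h1 : (1 : ℝ) - ((r (x, (1 : I))).2 : ℝ) ≤ u x := hle x 1
      rw [h] at h1
      simp only [Set.Icc.coe_one, Set.Icc.coe_zero, sub_zero] at h1
      linarith
  refine ⟨part1, part2, part3, part4, part5, part6, part7, ?_⟩
  -- the NDR pair structure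
  refine ⟨fun x => ⟨u x, hu0 x, hu1 x⟩, fun p => (r p).1,
    part2.subtype_mk _, ?_, part4, part5, part6, fun x hx => part7 x hx⟩
  ext x
  rw [part3]
  simp [Subtype.ext_iff]
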